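/- Let m ≥ 2 and n ≥ 1. The reversal of the finite m-bonacci word h_n starts with the two letters (n mod m)·0 if m does not divide n, and starts with 01 if m divides n. -/

import Mathlib

/-- The `m`-bonacci morphism on letters: `i ↦ 0(i+1)` for `i ≤ m-2`, `(m-1) ↦ 0`. -/
def phi (m a : ℕ) : List ℕ := if a = m - 1 then [0] else [0, a + 1]

/-- The `m`-bonacci morphism on words. -/
def phiW (m : ℕ) (w : List ℕ) : List ℕ := w.flatMap (phi m)

/-- The finite `m`-bonacci words `h_n = φ_m^n(0)`. -/
def hb (m : ℕ) : ℕ → List ℕ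
  | 0 => [0]
  | n+1 => phiW m (hb m n)

/-- The palindromic prefixes of the `m`-bonacci word, shifted:
`ub m n` is the paper's `u_{n+1}` (so `ub m 0 = u₁ = ε`, and `u_{n+2} = h_n u_{n+1}`). -/
def ub (m : ℕ) : ℕ → List ℕ
  | 0 => []
  | n+1 => hb m n ++ ub m n

/-- Number of occurrences of `x` as a factor of `w` (counted by starting position). -/
def occ (x w : List ℕ) : ℕ :=
  ((List.range (w.length + 1)).filter (fun i => x.isPrefixOf (w.drop i))).length

/-- A word is closed if it is a single letter or has a border (a proper factor that
is both a prefix and a suffix) occurring exactly twice in it. -/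
def ClosedWord (w : List ℕ) : Prop :=
  w.length = 1 ∨
    ∃ x : List ℕ, x ≠ [] ∧ x.length < w.length ∧ x <+: w ∧ x <:+ w ∧ occ x w = 2

/-- for `m ≥ 2` and `n ≥ 1`, `h_n^R` starts with `(n mod m)·0`
if `m ∤ n`, and with `01` if `m ∣ n`. -/
lemma phiW_append (m : ℕ) (a b : List ℕ) : phiW m (a ++ b) = phiW m a ++ phiW m b := by
  simp [phiW]

lemma suffix_phiW {m : ℕ} {x w : List ℕ} (h : x <:+ w) : phiW m x <:+ phiW m w := by
  obtain ⟨t, rfl⟩ := h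
  rw [phiW_append]; exact ⟨_, rfl⟩

lemma hb_suffix (m : ℕ) (hm : 2 ≤ m) : ∀ n, 1 ≤ n →
    (n % m = 0 → [1, 0] <:+ hb m n) ∧ (n % m ≠ 0 → [0, n % m] <:+ hb m n) := by
  have hm0 : 0 < m := by omega
  have hphi0 : phi m 0 = [0, 1] := by
    simp [phi]; omega
  have hz : (0 : ℕ) ≠ m - 1 := by omega
  have h1 : 1 % m = 1 := Nat.one_mod_eq_one.mpr (by omega)
  intro n
  induction n with
  | zero => omega
  | succ n ih =>
    intro _
    rcases Nat.eq_zero_or_pos n with rfl | hn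
    · constructor
      · intro h; rw [Nat.one_mod_eq_one.mpr (by omega)] at h; omega
      · intro _
        rw [Nat.one_mod_eq_one.mpr (by omega)]
        show [0, 1] <:+ phiW m (hb m 0)
        simp [hb, phiW, hphi0]
    · have ih := ih hn
      have hstep : (n+1) % m = (n % m + 1) % m := by
        conv_lhs => rw [Nat.add_mod]
        rw [h1]
      rcases Nat.eq_zero_or_pos (n % m) with h0 | hpos
      · -- h_n ends with [1,0]
        have hs : phiW m [1, 0] <:+ hb m (n+1) := suffix_phiW (ih.1 h0)
        have : [0, 1] <:+ hb m (n+1) := by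
          have : phiW m [1, 0] = phi m 1 ++ [0, 1] := by simp [phiW, hphi0]
          exact (List.suffix_append _ _).trans (this ▸ hs)
        have hmod : (n+1) % m = 1 := by rw [hstep, h0]; simpa using h1
        constructor
        · intro h; rw [hmod] at h; omega
        · intro _; rw [hmod]; exact this
      · have hlt : n % m < m := Nat.mod_lt _ hm0
        have hs : phiW m [0, n % m] <:+ hb m (n+1) := suffix_phiW (ih.2 (by omega))
        rcases eq_or_ne (n % m) (m - 1) with he | hne
        · have hmod : (n+1) % m = 0 := by
            rw [hstep, he, Nat.sub_add_cancel (by omega), Nat.mod_self]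
          have hps : phiW m [0, n % m] = [0, 1, 0] := by
            simp [phiW, phi, he, hz]
          constructor
          · intro _
            refine List.IsSuffix.trans ?_ hs
            rw [hps]; exact ⟨[0], rfl⟩
          · intro h; exact absurd hmod h
        · have hmod : (n+1) % m = n % m + 1 := by
            rw [hstep, Nat.mod_eq_of_lt (by omega)]
          have hps : phiW m [0, n % m] = [0, 1] ++ [0, n % m + 1] := by
            simp [phiW, phi, hne, hz]
          constructor
          · intro h; omega
          · intro _
            rw [hmod]
            exact (List.suffix_append _ _).trans (hps ▸ hs)

theorem hb_reverse_start :
    ∀ m n : ℕ, 2 ≤ m → 1 ≤ n →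
      (m ∣ n → [0, 1] <+: (hb m n).reverse) ∧
      (¬ m ∣ n → [n % m, 0] <+: (hb m n).reverse) := by
  intro m n hm hn
  have key := hb_suffix m hm n hn
  constructor
  · intro hd
    have : ([1, 0] : List ℕ).reverse <+: (hb m n).reverse :=
      List.reverse_prefix.mpr (key.1 (Nat.mod_eq_zero_of_dvd hd))
    simpa using this
  · intro hd
    have hne : n % m ≠ 0 := fun h => hd (Nat.dvd_of_mod_eq_zero h)
    have : ([0, n % m] : List ℕ).reverse <+: (hb m n).reverse :=
      List.reverse_prefix.mpr (key.2 hne)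
    simpa using this
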